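/- For every integer k ≥ 1, Φ_k(P_2) = C(k,2) and Φ_k(P_3) = k·C(k,2), and for every integer n ≥ 4, Φ_k(P_n) = C(k,2)·k^{n−2} + k·Φ_k(P_{n−2}). -/

import Mathlib

open SimpleGraph

def IsDistinguishing {V : Type*} {k : ℕ} (G : SimpleGraph V) (c : V → Fin k) : Prop :=
  ∀ α : G ≃g G, (∀ v, c (α v) = c v) → ∀ v, α v = v

noncomputable def Phi {V : Type*} (G : SimpleGraph V) (k : ℕ) : ℕ :=
  Nat.card (Quot (fun c₁ c₂ : {c : V → Fin k // IsDistinguishing G c} =>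
    ∃ α : G ≃g G, ∀ v, c₁.1 v = c₂.1 (α v)))

noncomputable def phi {V : Type*} (G : SimpleGraph V) (k : ℕ) : ℕ :=
  Nat.card (Quot (fun c₁ c₂ : {c : V → Fin k // IsDistinguishing G c ∧ Function.Surjective c} =>
    ∃ α : G ≃g G, ∀ v, c₁.1 v = c₂.1 (α v)))

noncomputable def theta {V : Type*} (G : SimpleGraph V) : ℕ :=
  sInf {t | ∀ k, t ≤ k → ∀ c : V → Fin k, Function.Surjective c → IsDistinguishing G c}

def stirling2 : ℕ → ℕ → ℕ
  | 0, 0 => 1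
  | 0, _ + 1 => 0
  | _ + 1, 0 => 0
  | n + 1, k + 1 => (k + 1) * stirling2 n (k + 1) + stirling2 n k

def IsDCPartition {V : Type*} [DecidableEq V] [Fintype V] (G : SimpleGraph V)
    (P : Finpartition (Finset.univ : Finset V)) : Prop :=
  ∀ α : G ≃g G, (∀ p ∈ P.parts, p.image ⇑α = p) → ∀ v, α v = v

def IsDPartition {V : Type*} [DecidableEq V] [Fintype V] (G : SimpleGraph V)
    (P : Finpartition (Finset.univ : Finset V)) : Prop :=
  ∀ α : G ≃g G, P.parts.image (fun p => p.image ⇑α) = P.parts → ∀ v, α v = v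

def PartEquiv {V : Type*} [DecidableEq V] [Fintype V] (G : SimpleGraph V)
    (P₁ P₂ : Finpartition (Finset.univ : Finset V)) : Prop :=
  ∃ α : G ≃g G, P₁.parts.image (fun p => p.image ⇑α) = P₂.parts

noncomputable def psi {V : Type*} [DecidableEq V] [Fintype V] (G : SimpleGraph V) (k : ℕ) : ℕ :=
  Nat.card (Quot (fun P₁ P₂ : {P : Finpartition (Finset.univ : Finset V) //
      IsDCPartition G P ∧ P.parts.card = k} => PartEquiv G P₁.1 P₂.1))

noncomputable def PsiAtMost {V : Type*} [DecidableEq V] [Fintype V] (G : SimpleGraph V) (k : ℕ) : ℕ :=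
  Nat.card (Quot (fun P₁ P₂ : {P : Finpartition (Finset.univ : Finset V) //
      IsDCPartition G P ∧ P.parts.card ≤ k} => PartEquiv G P₁.1 P₂.1))

noncomputable def PiAtMost {V : Type*} [DecidableEq V] [Fintype V] (G : SimpleGraph V) (k : ℕ) : ℕ :=
  Nat.card (Quot (fun P₁ P₂ : {P : Finpartition (Finset.univ : Finset V) //
      P.parts.card ≤ k} => PartEquiv G P₁.1 P₂.1))

noncomputable def XiAtMost {V : Type*} [DecidableEq V] [Fintype V] (G : SimpleGraph V) (k : ℕ) : ℕ :=
  Nat.card (Quot (fun P₁ P₂ : {P : Finpartition (Finset.univ : Finset V) //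
      IsDPartition G P ∧ P.parts.card ≤ k} => PartEquiv G P₁.1 P₂.1))

def kneserGraph2 (n : ℕ) : SimpleGraph {s : Finset (Fin n) // s.card = 2} where
  Adj a b := Disjoint a.1 b.1
  symm := ⟨fun a b h => h.symm⟩
  loopless := by
    refine ⟨?_⟩
    rintro ⟨s, hs⟩ h
    simp only [disjoint_self, Finset.bot_eq_empty] at h
    simp [h] at hs

def lexProd {V W : Type*} (X : SimpleGraph V) (Y : SimpleGraph W) : SimpleGraph (V × W) where
  Adj a b := X.Adj a.1 b.1 ∨ (a.1 = b.1 ∧ Y.Adj a.2 b.2)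
  symm := by
    refine ⟨?_⟩
    rintro ⟨x, y⟩ ⟨x', y'⟩ (h | ⟨h, h'⟩)
    · exact Or.inl h.symm
    · exact Or.inr ⟨h.symm, h'.symm⟩
  loopless := by
    refine ⟨?_⟩
    rintro ⟨x, y⟩ (h | ⟨-, h⟩)
    · exact X.irrefl h
    · exact Y.irrefl h

def IsNaturalAut {V W : Type*} (X : SimpleGraph V) (Y : SimpleGraph W)
    (μ : lexProd X Y ≃g lexProd X Y) : Prop :=
  ∀ x : V, ∃ x' : V, (fun p => μ p) '' ({x} ×ˢ (Set.univ : Set W)) = {x'} ×ˢ (Set.univ : Set W)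

noncomputable def distNumber {V : Type*} (G : SimpleGraph V) : ℕ :=
  sInf {k | ∃ c : V → Fin k, IsDistinguishing G c}


section PhiPathAux

lemma revIso_map_rel (n : ℕ) (u v : Fin n) :
    (pathGraph n).Adj (Fin.revPerm u) (Fin.revPerm v) ↔ (pathGraph n).Adj u v := by
  have hu := u.isLt; have hv := v.isLt
  simp only [Fin.revPerm_apply, pathGraph_adj, Fin.val_rev]
  omega

def revIso (n : ℕ) : pathGraph n ≃g pathGraph n where
  toEquiv := Fin.revPerm
  map_rel_iff' := revIso_map_rel n _ _

lemma revIso_apply (n : ℕ) (v : Fin n) : revIso n v = v.rev := rfl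

lemma path_aut {n : ℕ} (hn : 2 ≤ n) (α : pathGraph n ≃g pathGraph n) :
    (∀ v, α v = v) ∨ (∀ v, α v = v.rev) := by
  have h0 : (0:ℕ) < n := by omega
  have h1 : (1:ℕ) < n := by omega
  set a : ℕ → ℕ := fun i => if h : i < n then (α ⟨i, h⟩).val else 0 with ha
  have haval : ∀ i (h : i < n), a i = (α ⟨i, h⟩).val := by
    intro i h; simp [ha, dif_pos h]
  have abound : ∀ i, i < n → a i < n := by
    intro i h; rw [haval i h]; exact (α _).isLt
  have ainj : ∀ i j, i < n → j < n → a i = a j → i = j := by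
    intro i j hi hj h
    rw [haval i hi, haval j hj] at h
    have := α.toEquiv.injective (Fin.ext h)
    simpa using congrArg Fin.val this
  have astep : ∀ i, i + 1 < n → a (i+1) = a i + 1 ∨ a i = a (i+1) + 1 := by
    intro i h
    have hadj : (pathGraph n).Adj ⟨i, by omega⟩ ⟨i+1, h⟩ := by
      rw [pathGraph_adj]; left; rfl
    have := α.map_rel_iff.mpr hadj
    rw [pathGraph_adj] at this
    rw [haval i (by omega), haval (i+1) h]
    omega
  have hc01 : (0:ℕ)+1 = 1 := rfl
  rcases astep 0 h1 with hc | hc <;> rw [hc01] at hc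
  · left
    have claim : ∀ i, i < n → a i = a 0 + i := by
      intro i
      induction i using Nat.strong_induction_on with
      | _ i IH =>
        match i with
        | 0 => intro h; simp
        | 1 => intro h; omega
        | (j+2) =>
          intro h
          have e1 := IH (j+1) (by omega) (by omega)
          have e0 := IH j (by omega) (by omega)
          have hd := astep (j+1) (by rw [show j+1+1 = j+2 from rfl]; exact h)
          rw [show j+1+1 = j+2 from rfl] at hd
          rcases hd with hd | hd
          · omega
          · exfalso
            have : a (j+2) = a j := by omega
            have := ainj _ _ h (by omega) this
            omega
    have hlast := claim (n-1) (by omega)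
    have hle := abound (n-1) (by omega)
    have ha0 : a 0 = 0 := by omega
    intro v
    have hv := claim v.val v.isLt
    rw [haval v.val v.isLt] at hv
    simp only [Fin.eta] at hv
    apply Fin.ext
    omega
  · right
    have claim : ∀ i, i < n → a i + i = a 0 := by
      intro i
      induction i using Nat.strong_induction_on with
      | _ i IH =>
        match i with
        | 0 => intro h; simp
        | 1 => intro h; omega
        | (j+2) =>
          intro h
          have e1 := IH (j+1) (by omega) (by omega)
          have e0 := IH j (by omega) (by omega)
          have hd := astep (j+1) (by rw [show j+1+1 = j+2 from rfl]; exact h)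
          rw [show j+1+1 = j+2 from rfl] at hd
          rcases hd with hd | hd
          · exfalso
            have : a (j+2) = a j := by omega
            have := ainj _ _ h (by omega) this
            omega
          · omega
    have hlast := claim (n-1) (by omega)
    have hle := abound 0 (by omega)
    intro v
    have hv := claim v.val v.isLt
    rw [haval v.val v.isLt] at hv
    simp only [Fin.eta] at hv
    apply Fin.ext
    rw [Fin.val_rev]
    have := abound (n-1) (by omega)
    have hvlt := v.isLt
    omega

lemma rel_equivalence {V : Type*} (G : SimpleGraph V) (k : ℕ) :
    Equivalence (fun c₁ c₂ : {c : V → Fin k // IsDistinguishing G c} =>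
      ∃ α : G ≃g G, ∀ v, c₁.1 v = c₂.1 (α v)) := by
  constructor
  · exact fun c => ⟨Iso.refl, fun v => rfl⟩
  · rintro c₁ c₂ ⟨α, h⟩
    refine ⟨α.symm, fun v => ?_⟩
    have := h (α.symm v)
    rw [RelIso.apply_symm_apply] at this
    exact this.symm
  · rintro c₁ c₂ c₃ ⟨α, h⟩ ⟨β, h'⟩
    exact ⟨α.trans β, fun v => (h v).trans (h' (α v))⟩

lemma two_mul_card_quot {A : Type*} [Finite A] (r : A → A → Prop) (hr : Equivalence r)
    (ι : A → A) (hι : ∀ a, ι a ≠ a)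
    (hcl : ∀ a b, r a b ↔ (a = b ∨ a = ι b)) :
    2 * Nat.card (Quot r) = Nat.card A := by
  classical
  letI : Fintype A := Fintype.ofFinite A
  letI : Fintype (Quot r) := Fintype.ofFinite _
  have key : ∀ b : Quot r, Nat.card {a : A // Quot.mk r a = b} = 2 := by
    intro b
    induction b using Quot.ind with
    | _ a₀ =>
      have hset : {a : A | Quot.mk r a = Quot.mk r a₀} = {a₀, ι a₀} := by
        ext a
        simp only [Set.mem_setOf_eq, Quot.eq, hr.eqvGen_iff, hcl, Set.mem_insert_iff,
          Set.mem_singleton_iff]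
      calc Nat.card {a : A // Quot.mk r a = Quot.mk r a₀}
          = ({a : A | Quot.mk r a = Quot.mk r a₀} : Set A).ncard :=
            Nat.card_coe_set_eq _
        _ = ({a₀, ι a₀} : Set A).ncard := by rw [hset]
        _ = 2 := Set.ncard_pair (hι a₀).symm
  have h2 : ∀ b : Quot r, Fintype.card {a : A // Quot.mk r a = b} = 2 := by
    intro b; rw [← Nat.card_eq_fintype_card]; exact key b
  calc 2 * Nat.card (Quot r) = 2 * Fintype.card (Quot r) := by rw [Nat.card_eq_fintype_card]
    _ = ∑ _b : Quot r, 2 := by rw [Finset.sum_const, Finset.card_univ, smul_eq_mul, mul_comm]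
    _ = ∑ b : Quot r, Fintype.card {a : A // Quot.mk r a = b} :=
        Finset.sum_congr rfl (fun b _ => (h2 b).symm)
    _ = Fintype.card (Σ b : Quot r, {a : A // Quot.mk r a = b}) := Fintype.card_sigma.symm
    _ = Fintype.card A := Fintype.card_congr (Equiv.sigmaFiberEquiv _)
    _ = Nat.card A := (Nat.card_eq_fintype_card).symm

def palEquiv (n k : ℕ) :
    {c : Fin n → Fin k // ∀ v, c v.rev = c v} ≃ (Fin ((n+1)/2) → Fin k) where
  toFun c j := c.1 ⟨j.val, by have := j.isLt; omega⟩
  invFun g := by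
    refine ⟨fun i => if h : i.val < (n+1)/2 then g ⟨i.val, h⟩
      else g ⟨n - 1 - i.val, by have := i.isLt; omega⟩, ?_⟩
    intro v
    dsimp only
    have hv := v.isLt
    have hrev : (v.rev).val = n - 1 - v.val := by rw [Fin.val_rev]; omega
    by_cases h1 : v.val < (n+1)/2 <;> by_cases h2 : (v.rev).val < (n+1)/2
    · have : v.val = n - 1 - v.val := by omega
      rw [dif_pos h2, dif_pos h1]
      congr 1
      apply Fin.ext
      simp only [hrev, Fin.val_mk]
      omega
    · rw [dif_neg h2, dif_pos h1]
      congr 1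
      apply Fin.ext
      simp only [hrev, Fin.val_mk]
      omega
    · rw [dif_pos h2, dif_neg h1]
      congr 1
      apply Fin.ext
      simp only [hrev, Fin.val_mk]
    · exfalso; omega
  left_inv c := by
    apply Subtype.ext
    funext i
    have hi := i.isLt
    by_cases h : i.val < (n+1)/2
    · simp only [dif_pos h, Fin.eta]
    · simp only [dif_neg h]
      have : (⟨n - 1 - i.val, by omega⟩ : Fin n) = i.rev := by
        apply Fin.ext; simp only [Fin.val_rev, Fin.val_mk]; omega
      rw [this]
      exact c.2 i
  right_inv g := by
    funext j
    have hj := j.isLt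
    simp only [dif_pos hj, Fin.eta]

lemma dist_iff {n k : ℕ} (hn : 2 ≤ n) (c : Fin n → Fin k) :
    IsDistinguishing (pathGraph n) c ↔ ¬ (∀ v : Fin n, c v.rev = c v) := by
  constructor
  · intro hd hall
    have h := hd (revIso n) (fun v => by rw [revIso_apply]; exact hall v) ⟨0, by omega⟩
    rw [revIso_apply] at h
    have := congrArg Fin.val h
    rw [Fin.val_rev] at this
    simp only [Fin.val_mk] at this
    omega
  · intro hne α hfix v
    rcases path_aut hn α with h | h
    · exact h v
    · exact absurd (fun v => by rw [← h v]; exact hfix v) hne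

lemma dist_rev {n k : ℕ} (hn : 2 ≤ n) {c : Fin n → Fin k}
    (h : IsDistinguishing (pathGraph n) c) :
    IsDistinguishing (pathGraph n) (fun v => c v.rev) := by
  rw [dist_iff hn] at h ⊢
  intro hall
  apply h
  intro v
  have h2 := hall v
  simp only [Fin.rev_rev] at h2
  exact h2.symm

lemma rel_iff {n k : ℕ} (hn : 2 ≤ n)
    (c₁ c₂ : {c : Fin n → Fin k // IsDistinguishing (pathGraph n) c}) :
    (∃ α : pathGraph n ≃g pathGraph n, ∀ v, c₁.1 v = c₂.1 (α v)) ↔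
      (c₁.1 = c₂.1 ∨ c₁.1 = fun v => c₂.1 v.rev) := by
  constructor
  · rintro ⟨α, h⟩
    rcases path_aut hn α with ha | ha
    · left; funext v; rw [h v, ha v]
    · right; funext v; rw [h v, ha v]
  · rintro (h | h)
    · exact ⟨Iso.refl, fun v => by rw [h]; rfl⟩
    · refine ⟨revIso n, fun v => ?_⟩
      rw [h]
      rfl


lemma two_mul_phi {n : ℕ} (k : ℕ) (hn : 2 ≤ n) :
    2 * Phi (pathGraph n) k = k ^ n - k ^ ((n+1)/2) := by
  classical
  rw [Phi]
  rw [two_mul_card_quot _ (rel_equivalence (pathGraph n) k)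
    (fun c => ⟨fun v => c.1 v.rev, dist_rev hn c.2⟩)
    (fun c hc => by
      have hfun : (fun v : Fin n => c.1 v.rev) = c.1 := congrArg Subtype.val hc
      exact (dist_iff hn c.1).mp c.2 (fun v => congrFun hfun v))
    (fun a b => by
      rw [rel_iff hn]
      simp only [Subtype.ext_iff])]
  have e1 : {c : Fin n → Fin k // ¬ ∀ v : Fin n, c v.rev = c v} ≃
      {c : Fin n → Fin k // IsDistinguishing (pathGraph n) c} :=
    Equiv.subtypeEquivRight (fun c => (dist_iff hn c).symm)
  rw [← Nat.card_congr e1]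
  letI : Fintype {c : Fin n → Fin k // ∀ v : Fin n, c v.rev = c v} := Fintype.ofFinite _
  letI : Fintype {c : Fin n → Fin k // ¬ ∀ v : Fin n, c v.rev = c v} := Fintype.ofFinite _
  rw [Nat.card_eq_fintype_card, Fintype.card_subtype_compl,
    ← Nat.card_eq_fintype_card, ← Nat.card_eq_fintype_card,
    Nat.card_congr (palEquiv n k), Nat.card_fun, Nat.card_fun]
  simp [Nat.card_eq_fintype_card]

lemma two_mul_choose_two (k : ℕ) (hk : 1 ≤ k) : 2 * k.choose 2 = k * (k - 1) := by
  have heven : Even ((k-1) * (k-1+1)) := Nat.even_mul_succ_self (k-1)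
  rw [show k-1+1 = k by omega, mul_comm] at heven
  rw [Nat.choose_two_right, Nat.mul_div_cancel' heven.two_dvd]

end PhiPathAux

theorem Phi_pathGraph (k : ℕ) (hk : 1 ≤ k) :
    Phi (pathGraph 2) k = k.choose 2 ∧
    Phi (pathGraph 3) k = k * k.choose 2 ∧
    ∀ n : ℕ, 4 ≤ n →
      Phi (pathGraph n) k = k.choose 2 * k ^ (n - 2) + k * Phi (pathGraph (n - 2)) k := by
  have h2 : (0:ℕ) < 2 := by norm_num
  refine ⟨?_, ?_, ?_⟩
  · apply Nat.eq_of_mul_eq_mul_left h2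
    rw [two_mul_phi k (by norm_num), two_mul_choose_two k hk]
    norm_num
    zify [show k ≤ k ^ 2 from Nat.le_self_pow (by norm_num) k, hk]
    ring
  · apply Nat.eq_of_mul_eq_mul_left h2
    rw [two_mul_phi k (by norm_num),
      show 2 * (k * k.choose 2) = k * (2 * k.choose 2) by ring,
      two_mul_choose_two k hk]
    norm_num
    zify [show k ^ 2 ≤ k ^ 3 from Nat.pow_le_pow_right (by omega) (by omega), hk]
    ring
  · intro n hn
    obtain ⟨a, rfl⟩ : ∃ a, n = a + 2 := ⟨n - 2, by omega⟩
    have ha : 2 ≤ a := by omega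
    apply Nat.eq_of_mul_eq_mul_left h2
    rw [two_mul_phi k (by omega), mul_add,
      show a + 2 - 2 = a by omega,
      show 2 * (k * Phi (pathGraph a) k) = k * (2 * Phi (pathGraph a) k) by ring,
      two_mul_phi k ha,
      show (a + 2 + 1)/2 = (a+1)/2 + 1 by omega,
      show 2 * (k.choose 2 * k ^ a) = 2 * k.choose 2 * k ^ a by ring,
      two_mul_choose_two k hk]
    zify [show k ^ ((a+1)/2) ≤ k ^ a from Nat.pow_le_pow_right (by omega) (by omega),
      show k ^ ((a+1)/2 + 1) ≤ k ^ (a+2) from Nat.pow_le_pow_right (by omega) (by omega),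
      hk]
    ring
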